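/- Terquem's theorem: Let A, B, C be affinely independent points in the Euclidean plane. Let A₁ be strictly between B and C, B₁ strictly between C and A, and C₁ strictly between A and B, with A₁, B₁, C₁ affinely independent, and suppose the lines AA₁, BB₁, CC₁ have a common point. Let S be the circle through A₁, B₁, C₁, and let A₂, B₂, C₂ be points with A₂ strictly between B and C, B₂ strictly between C and A, C₂ strictly between A and B, such that S ∩ line BC = {A₁, A₂}, S ∩ line CA = {B₁, B₂}, and S ∩ line AB = {C₁, C₂}. Then the lines AA₂, BB₂, CC₂ have a common point. -/

import Mathlib

open AffineMap

lemma tri_li {A B C : EuclideanSpace ℝ (Fin 2)} (h : AffineIndependent ℝ ![A, B, C]) :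
    ∀ x y : ℝ, x • (B - A) + y • (C - A) = 0 → x = 0 ∧ y = 0 := by
  intro x y hxy
  have h2 := affineIndependent_iff.1 h Finset.univ ![-(x + y), x, y]
    (by simp [Fin.sum_univ_three])
    (by
      simp [Fin.sum_univ_three]
      linear_combination (norm := module) hxy)
  exact ⟨h2 1 (Finset.mem_univ _), h2 2 (Finset.mem_univ _)⟩

lemma get_param {X Y P : EuclideanSpace ℝ (Fin 2)} (h : P ∈ line[ℝ, X, Y]) :
    ∃ s : ℝ, P - X = s • (Y - X) := by
  have h' : (P - X) +ᵥ X ∈ line[ℝ, X, Y] := by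
    simpa [vadd_eq_add, sub_add_cancel] using h
  obtain ⟨s, hs⟩ := vadd_left_mem_affineSpan_pair.1 h'
  exact ⟨s, by simpa [vsub_eq_sub] using hs.symm⟩

lemma side_power {O B C P Q : EuclideanSpace ℝ (Fin 2)} {r p q : ℝ} (hr : 0 < r)
    (hBC : B ≠ C)
    (hP : AffineMap.lineMap B C p = P) (hQ : AffineMap.lineMap B C q = Q)
    (hset : Metric.sphere O r ∩ (line[ℝ, B, C] : Set (EuclideanSpace ℝ (Fin 2))) = {P, Q}) :
    dist B O ^ 2 - r ^ 2 = dist B C ^ 2 * (p * q) ∧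
      dist C O ^ 2 - r ^ 2 = dist B C ^ 2 * ((1 - p) * (1 - q)) := by
  set u : EuclideanSpace ℝ (Fin 2) := C - B with hu
  set L : ℝ := ‖u‖ ^ 2 with hL
  set M : ℝ := inner ℝ u (B - O) with hM
  set N : ℝ := ‖B - O‖ ^ 2 - r ^ 2 with hN
  have hu0 : u ≠ 0 := sub_ne_zero.2 (Ne.symm hBC)
  have hL0 : 0 < L := by rw [hL]; exact pow_pos (norm_pos_iff.2 hu0) 2
  have hL0' : L ≠ 0 := ne_of_gt hL0
  have val : ∀ a : ℝ, dist (AffineMap.lineMap B C a : EuclideanSpace ℝ (Fin 2)) O ^ 2 - r ^ 2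
      = L * a ^ 2 + 2 * M * a + N := by
    intro a
    have h1 : (AffineMap.lineMap B C a : EuclideanSpace ℝ (Fin 2)) - O = a • u + (B - O) := by
      simp [AffineMap.lineMap_apply, hu]
      module
    rw [dist_eq_norm, h1, @norm_add_sq_real]
    rw [real_inner_smul_left, norm_smul]
    simp [hL, hN, hM, mul_pow]
    ring
  have key : ∀ a : ℝ, (AffineMap.lineMap B C a : EuclideanSpace ℝ (Fin 2)) ∈ Metric.sphere O r
      ↔ L * a ^ 2 + 2 * M * a + N = 0 := by
    intro a
    rw [Metric.mem_sphere, ← val a]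
    constructor
    · intro h; rw [h]; ring
    · intro h
      have hd := dist_nonneg (x := (AffineMap.lineMap B C a : EuclideanSpace ℝ (Fin 2))) (y := O)
      nlinarith
  have hPmem : P ∈ Metric.sphere O r ∩ (line[ℝ, B, C] : Set (EuclideanSpace ℝ (Fin 2))) := by
    rw [hset]; left; rfl
  have hQmem : Q ∈ Metric.sphere O r ∩ (line[ℝ, B, C] : Set (EuclideanSpace ℝ (Fin 2))) := by
    rw [hset]; right; rfl
  have hp0 : L * p ^ 2 + 2 * M * p + N = 0 := (key p).1 (by rw [hP]; exact hPmem.1)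
  have hq0 : L * q ^ 2 + 2 * M * q + N = 0 := (key q).1 (by rw [hQ]; exact hQmem.1)
  have roots : ∀ a : ℝ, L * a ^ 2 + 2 * M * a + N = 0 → a = p ∨ a = q := by
    intro a ha
    have hmem : (AffineMap.lineMap B C a : EuclideanSpace ℝ (Fin 2)) ∈ ({P, Q} : Set _) := by
      rw [← hset]
      exact ⟨(key a).2 ha, AffineMap.lineMap_mem_affineSpan_pair a B C⟩
    rcases hmem with h | h
    · left; exact lineMap_injective ℝ hBC (by rw [hP]; exact h)
    · right; exact lineMap_injective ℝ hBC (by rw [hQ]; exact h)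
  have sumrel : 2 * M = -(L * (p + q)) := by
    by_cases hpq : p = q
    · subst hpq
      by_contra hcon
      set a' : ℝ := -(2 * M) / L - p with ha'
      have hsum : L * (a' + p) = -(2 * M) := by
        rw [ha']; field_simp; ring
      have ha'root : L * a' ^ 2 + 2 * M * a' + N = 0 := by
        linear_combination hp0 + (a' - p) * hsum
      have hne : a' ≠ p := by
        intro h
        apply hcon
        rw [h] at hsum
        linarith
      rcases roots a' ha'root with h | h <;> exact hne h
    · have hdiff : (p - q) * (L * (p + q) + 2 * M) = 0 := by linear_combination hp0 - hq0
      rcases mul_eq_zero.1 hdiff with h | h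
      · exact absurd (sub_eq_zero.1 h) hpq
      · linarith
  have hN' : N = L * (p * q) := by linear_combination hp0 - p * sumrel
  have hBC2 : dist B C ^ 2 = L := by rw [dist_eq_norm, hL, hu, norm_sub_rev]
  constructor
  · have hB : dist B O ^ 2 - r ^ 2 = N := by simpa using val 0
    rw [hB, hBC2, hN']
  · have hC : dist C O ^ 2 - r ^ 2 = L * 1 ^ 2 + 2 * M * 1 + N := by simpa using val 1
    rw [hC, hBC2]
    linear_combination sumrel + hN'


lemma cevian_concur {A B C A₂ B₂ C₂ : EuclideanSpace ℝ (Fin 2)} {a₂ b₂ c₂ x y z : ℝ}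
    (hA₂v : A₂ = a₂ • (C - B) + B) (hB₂v : B₂ = b₂ • (A - C) + C)
    (hC₂v : C₂ = c₂ • (B - A) + A)
    (hS : x + y + z ≠ 0)
    (h1 : (y + z) * (1 - a₂) = y) (h2 : (y + z) * a₂ = z)
    (h3 : (x + z) * (1 - b₂) = z) (h4 : (x + z) * b₂ = x)
    (h5 : (x + y) * (1 - c₂) = x) (h6 : (x + y) * c₂ = y) :
    ∃ Q, Q ∈ line[ℝ, A, A₂] ∧ Q ∈ line[ℝ, B, B₂] ∧ Q ∈ line[ℝ, C, C₂] := by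
  refine ⟨A + (y / (x + y + z)) • (B - A) + (z / (x + y + z)) • (C - A), ?_, ?_, ?_⟩
  · have hm : A + (y / (x + y + z)) • (B - A) + (z / (x + y + z)) • (C - A)
        = AffineMap.lineMap A A₂ ((y + z) / (x + y + z)) := by
      rw [AffineMap.lineMap_apply, hA₂v, vsub_eq_sub, vadd_eq_add]
      match_scalars
      · field_simp
        try ring
      · field_simp
        linear_combination -h1
      · field_simp
        linear_combination -h2
    rw [hm]
    exact AffineMap.lineMap_mem_affineSpan_pair _ _ _
  · have hm : A + (y / (x + y + z)) • (B - A) + (z / (x + y + z)) • (C - A)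
        = AffineMap.lineMap B B₂ ((x + z) / (x + y + z)) := by
      rw [AffineMap.lineMap_apply, hB₂v, vsub_eq_sub, vadd_eq_add]
      match_scalars
      · field_simp
        linear_combination -h4
      · field_simp
        try ring
      · field_simp
        linear_combination -h3
    rw [hm]
    exact AffineMap.lineMap_mem_affineSpan_pair _ _ _
  · have hm : A + (y / (x + y + z)) • (B - A) + (z / (x + y + z)) • (C - A)
        = AffineMap.lineMap C C₂ ((x + y) / (x + y + z)) := by
      rw [AffineMap.lineMap_apply, hC₂v, vsub_eq_sub, vadd_eq_add]
      match_scalars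
      · field_simp
        linear_combination -h5
      · field_simp
        linear_combination -h6
      · field_simp
        try ring
    rw [hm]
    exact AffineMap.lineMap_mem_affineSpan_pair _ _ _

set_option maxHeartbeats 1600000 in
/-- **Terquem's theorem.** If the cevians `AA₁`, `BB₁`, `CC₁` of triangle `ABC` are
concurrent and the circle through `A₁`, `B₁`, `C₁` meets the sides `BC`, `CA`, `AB` again
in `A₂`, `B₂`, `C₂`, then the cevians `AA₂`, `BB₂`, `CC₂` are also concurrent. -/
theorem terquem (A B C A₁ B₁ C₁ A₂ B₂ C₂ O : EuclideanSpace ℝ (Fin 2)) (r : ℝ)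
    (hABC : AffineIndependent ℝ ![A, B, C])
    (hA₁ : Sbtw ℝ B A₁ C) (hB₁ : Sbtw ℝ C B₁ A) (hC₁ : Sbtw ℝ A C₁ B)
    (hA₁B₁C₁ : AffineIndependent ℝ ![A₁, B₁, C₁])
    (hconc : ∃ P, P ∈ line[ℝ, A, A₁] ∧ P ∈ line[ℝ, B, B₁] ∧ P ∈ line[ℝ, C, C₁])
    (hr : 0 < r)
    (hA₁S : A₁ ∈ Metric.sphere O r) (hB₁S : B₁ ∈ Metric.sphere O r)
    (hC₁S : C₁ ∈ Metric.sphere O r)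
    (hA₂ : Sbtw ℝ B A₂ C) (hB₂ : Sbtw ℝ C B₂ A) (hC₂ : Sbtw ℝ A C₂ B)
    (hSa : Metric.sphere O r ∩ (line[ℝ, B, C] : Set (EuclideanSpace ℝ (Fin 2))) = {A₁, A₂})
    (hSb : Metric.sphere O r ∩ (line[ℝ, C, A] : Set (EuclideanSpace ℝ (Fin 2))) = {B₁, B₂})
    (hSc : Metric.sphere O r ∩ (line[ℝ, A, B] : Set (EuclideanSpace ℝ (Fin 2))) = {C₁, C₂}) :
    ∃ Q, Q ∈ line[ℝ, A, A₂] ∧ Q ∈ line[ℝ, B, B₂] ∧ Q ∈ line[ℝ, C, C₂] := by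
  obtain ⟨⟨a₁, ha₁I, ha₁e⟩, hBC⟩ := sbtw_iff_mem_image_Ioo_and_ne.1 hA₁
  obtain ⟨⟨b₁, hb₁I, hb₁e⟩, hCA⟩ := sbtw_iff_mem_image_Ioo_and_ne.1 hB₁
  obtain ⟨⟨c₁, hc₁I, hc₁e⟩, hAB⟩ := sbtw_iff_mem_image_Ioo_and_ne.1 hC₁
  obtain ⟨⟨a₂, ha₂I, ha₂e⟩, -⟩ := sbtw_iff_mem_image_Ioo_and_ne.1 hA₂
  obtain ⟨⟨b₂, hb₂I, hb₂e⟩, -⟩ := sbtw_iff_mem_image_Ioo_and_ne.1 hB₂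
  obtain ⟨⟨c₂, hc₂I, hc₂e⟩, -⟩ := sbtw_iff_mem_image_Ioo_and_ne.1 hC₂
  obtain ⟨ha₁0, ha₁1⟩ := ha₁I
  obtain ⟨hb₁0, hb₁1⟩ := hb₁I
  obtain ⟨hc₁0, hc₁1⟩ := hc₁I
  obtain ⟨ha₂0, ha₂1⟩ := ha₂I
  obtain ⟨hb₂0, hb₂1⟩ := hb₂I
  obtain ⟨hc₂0, hc₂1⟩ := hc₂I
  -- power of a point for the three sides
  obtain ⟨Ea0, Ea1⟩ := side_power hr hBC ha₁e ha₂e hSa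
  obtain ⟨Eb0, Eb1⟩ := side_power hr hCA hb₁e hb₂e hSb
  obtain ⟨Ec0, Ec1⟩ := side_power hr hAB hc₁e hc₂e hSc
  have hLa : (0:ℝ) < dist B C ^ 2 := pow_pos (dist_pos.2 hBC) 2
  have hLb : (0:ℝ) < dist C A ^ 2 := pow_pos (dist_pos.2 hCA) 2
  have hLc : (0:ℝ) < dist A B ^ 2 := pow_pos (dist_pos.2 hAB) 2
  -- vector descriptions of the six points
  have hA₁v : A₁ = a₁ • (C - B) + B := by
    rw [← ha₁e]; simp [AffineMap.lineMap_apply]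
  have hB₁v : B₁ = b₁ • (A - C) + C := by
    rw [← hb₁e]; simp [AffineMap.lineMap_apply]
  have hC₁v : C₁ = c₁ • (B - A) + A := by
    rw [← hc₁e]; simp [AffineMap.lineMap_apply]
  have hA₂v : A₂ = a₂ • (C - B) + B := by
    rw [← ha₂e]; simp [AffineMap.lineMap_apply]
  have hB₂v : B₂ = b₂ • (A - C) + C := by
    rw [← hb₂e]; simp [AffineMap.lineMap_apply]
  have hC₂v : C₂ = c₂ • (B - A) + A := by
    rw [← hc₂e]; simp [AffineMap.lineMap_apply]
  -- Ceva for the first cevians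
  obtain ⟨P, hPA, hPB, hPC⟩ := hconc
  obtain ⟨s, hs⟩ := get_param hPA
  obtain ⟨t, ht⟩ := get_param hPB
  obtain ⟨w, hw⟩ := get_param hPC
  rw [hA₁v] at hs
  rw [hB₁v] at ht
  rw [hC₁v] at hw
  have e1 : P - A = (s * (1 - a₁)) • (B - A) + (s * a₁) • (C - A) := by
    linear_combination (norm := module) hs
  have e2 : P - A = (1 - t) • (B - A) + (t * (1 - b₁)) • (C - A) := by
    linear_combination (norm := module) ht
  have e3 : P - A = (w * c₁) • (B - A) + (1 - w) • (C - A) := by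
    linear_combination (norm := module) hw
  have k12 := tri_li hABC (s * (1 - a₁) - (1 - t)) (s * a₁ - t * (1 - b₁))
    (by linear_combination (norm := module) e2 - e1)
  have k23 := tri_li hABC ((1 - t) - w * c₁) (t * (1 - b₁) - (1 - w))
    (by linear_combination (norm := module) e3 - e2)
  have r1 : s * (1 - a₁) = 1 - t := sub_eq_zero.1 k12.1
  have r2 : s * a₁ = t * (1 - b₁) := sub_eq_zero.1 k12.2
  have r3 : 1 - t = w * c₁ := sub_eq_zero.1 k23.1
  have r4 : t * (1 - b₁) = 1 - w := sub_eq_zero.1 k23.2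
  have hs0 : s ≠ 0 := by
    intro h
    rw [h, zero_mul] at r1 r2
    have ht1 : t = 1 := by linarith
    rw [ht1, one_mul] at r2
    linarith
  have hw0 : w ≠ 0 := by
    intro h
    rw [h, zero_mul] at r3
    rw [h] at r4
    have ht1 : t = 1 := by linarith
    rw [ht1, one_mul] at r4
    linarith
  have ceva1 : a₁ * b₁ * c₁ = (1 - a₁) * (1 - b₁) * (1 - c₁) := by
    apply mul_right_cancel₀ (mul_ne_zero hs0 hw0)
    linear_combination (b₁ * (w * c₁)) * r2 - (t * (1 - b₁) * b₁) * r3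
      - ((1 - t) * (1 - b₁)) * r3 - ((1 - t) * (1 - b₁)) * r4
      - ((1 - b₁) * (w * (1 - c₁))) * r1
  -- multiply the power relations
  have p1 : dist B C ^ 2 * (a₁ * a₂) = dist A B ^ 2 * ((1 - c₁) * (1 - c₂)) := by
    linarith
  have p2 : dist C A ^ 2 * (b₁ * b₂) = dist B C ^ 2 * ((1 - a₁) * (1 - a₂)) := by
    linarith
  have p3 : dist A B ^ 2 * (c₁ * c₂) = dist C A ^ 2 * ((1 - b₁) * (1 - b₂)) := by
    linarith
  have key2 : (a₁ * a₂) * (b₁ * b₂) * (c₁ * c₂)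
      = ((1 - a₁) * (1 - a₂)) * ((1 - b₁) * (1 - b₂)) * ((1 - c₁) * (1 - c₂)) := by
    apply mul_left_cancel₀ (show dist B C ^ 2 * dist C A ^ 2 * dist A B ^ 2 ≠ 0 by positivity)
    linear_combination (dist C A ^ 2 * (b₁ * b₂) * dist A B ^ 2 * (c₁ * c₂)) * p1
      + (dist A B ^ 2 * ((1 - c₁) * (1 - c₂)) * dist A B ^ 2 * (c₁ * c₂)) * p2
      + (dist A B ^ 2 * ((1 - c₁) * (1 - c₂)) * dist B C ^ 2 * ((1 - a₁) * (1 - a₂))) * p3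
  have ceva2 : a₂ * b₂ * c₂ = (1 - a₂) * (1 - b₂) * (1 - c₂) := by
    apply mul_left_cancel₀ (ne_of_gt (mul_pos (mul_pos ha₁0 hb₁0) hc₁0))
    linear_combination key2 - ((1 - a₂) * (1 - b₂) * (1 - c₂)) * ceva1
  -- construct the common point of the new cevians
  refine cevian_concur hA₂v hB₂v hC₂v (x := b₂ * (1 - c₂)) (y := b₂ * c₂)
    (z := (1 - b₂) * (1 - c₂)) ?_ ?_ ?_ ?_ ?_ ?_ ?_
  · nlinarith
  · linear_combination -ceva2
  · linear_combination ceva2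
  · ring
  · ring
  · ring
  · ring
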